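/- Let C be a small category with finite products, equipped with a symmetric monoidal structure (⊗, I) such that the tensor − ⊗ − : C × C → C preserves finite products in each variable separately. If F, G : C → Set both preserve finite products, then their Day convolution F ⊗ G, given by the coend (F ⊗ G)(c) = ∫^{c₁,c₂ ∈ C} C(c₁ ⊗ c₂, c) × F(c₁) × G(c₂), also preserves finite products. -/

import Mathlib

open CategoryTheory CategoryTheory.Limits Opposite

universe w v u

namespace Paper

variable {C : Type u} [Category.{v} C]

/-- An object is finitely presentable if its covariant hom-functor preserves
small filtered colimits. -/
def FinPres (A : C) : Prop :=
  ∀ (J : Type v) (_ : SmallCategory J), IsFiltered J →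
    PreservesColimitsOfShape J (coyoneda.obj (op A))

/-- `f` is a regular epimorphism (a coequalizer of some pair). -/
def IsRegEpi {X Y : C} (f : X ⟶ Y) : Prop := Nonempty (RegularEpi f)

/-- `P` is regular projective: `Hom(P,-)` sends regular epimorphisms to surjections. -/
def RegProjective (P : C) : Prop :=
  ∀ ⦃X Y : C⦄ (f : X ⟶ Y), IsRegEpi f → Function.Surjective (fun g : P ⟶ X => g ≫ f)

/-- A regular category: finite limits, coequalizers of kernel pairs, and regular
epimorphisms stable under pullback. -/
structure IsRegularCategory (C : Type u) [Category.{v} C] : Prop where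
  hasFiniteLimits : HasFiniteLimits C
  hasCoequalizersOfKernelPairs :
    ∀ {X Y R : C} (f : X ⟶ Y) (p q : R ⟶ X), IsKernelPair f p q → HasCoequalizer p q
  regEpiPullbackStable :
    ∀ {P X Y Z : C} (fst : P ⟶ X) (snd : P ⟶ Y) (f : X ⟶ Z) (g : Y ⟶ Z),
      IsPullback fst snd f g → IsRegEpi f → IsRegEpi snd

/-- `(p, q)` is an internal equivalence relation on `X` (via generalized elements). -/
structure IsEquivalenceRelationPair {R X : C} (p q : R ⟶ X) : Prop where
  jointly_mono : ∀ {Z : C} (a b : Z ⟶ R), a ≫ p = b ≫ p → a ≫ q = b ≫ q → a = b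
  refl : ∀ {Z : C} (x : Z ⟶ X), ∃ r : Z ⟶ R, r ≫ p = x ∧ r ≫ q = x
  symm : ∀ {Z : C} (r : Z ⟶ R), ∃ s : Z ⟶ R, s ≫ p = r ≫ q ∧ s ≫ q = r ≫ p
  trans : ∀ {Z : C} (r s : Z ⟶ R), r ≫ q = s ≫ p →
    ∃ t : Z ⟶ R, t ≫ p = r ≫ p ∧ t ≫ q = s ≫ q

/-- An exact category: regular and every equivalence relation is effective. -/
structure IsExactCategory (C : Type u) [Category.{v} C] : Prop extends IsRegularCategory C where
  effectiveEquivalenceRelations :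
    ∀ {R X : C} (p q : R ⟶ X), IsEquivalenceRelationPair p q →
      ∃ (Y : C) (f : X ⟶ Y), IsKernelPair f p q

/-- Locally finitely presentable category. -/
structure IsLFP (C : Type u) [Category.{v} C] : Prop where
  hasColimits : HasColimitsOfSize.{v, v} C
  exists_generator : ∃ (ι : Type v) (G : ι → C),
    ObjectProperty.IsDetecting (fun X => X ∈ Set.range G) ∧ ∀ i, FinPres (G i)

/-- A finitary quasivariety: cocomplete with a small strong generator of finitely
presentable regular projective objects. -/
structure IsFinitaryQuasivariety (C : Type u) [Category.{v} C] : Prop where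
  hasColimits : HasColimitsOfSize.{v, v} C
  exists_generator : ∃ (ι : Type v) (G : ι → C),
    ObjectProperty.IsDetecting (fun X => X ∈ Set.range G) ∧ ∀ i, FinPres (G i) ∧ RegProjective (G i)

/-- The injectivity class determined by a family of morphisms. -/
def Inj {L : Type u} [Category.{v} L] {ι : Type w} (A B : ι → L) (h : ∀ i, A i ⟶ B i) :
    Set L :=
  {X | ∀ (i : ι) (g : A i ⟶ X), ∃ g' : B i ⟶ X, h i ≫ g' = g}

/-- `p : X ⟶ S` is a weak reflection of `X` into `D`. -/
def WeakReflection {L : Type u} [Category.{v} L] (D : Set L) {X S : L} (p : X ⟶ S) : Prop :=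
  S ∈ D ∧ ∀ T ∈ D, ∀ g : X ⟶ T, ∃ k : S ⟶ T, p ≫ k = g


open MonoidalCategory

/-- The external product of two `Type`-valued functors. -/
def externalProd {C : Type v} [SmallCategory C] (F G : C ⥤ Type v) :
    C × C ⥤ Type v where
  obj x := F.obj x.1 × G.obj x.2
  map f := TypeCat.ofHom fun p => (F.map f.1 p.1, G.map f.2 p.2)
  map_id x := by
    ext p <;> simp
  map_comp f g := by
    ext p <;> simp

/-- The tensor product, as a functor `C × C ⥤ C`. -/
def tensorF (C : Type v) [SmallCategory C] [MonoidalCategory C] : C × C ⥤ C :=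
  Functor.uncurry.obj (curriedTensor C)

section Statement7Aux

open CategoryTheory.Functor

variable {C : Type v} [SmallCategory C] [HasFiniteProducts C]

section PairUp

variable (F : C ⥤ Type v) [PreservesLimitsOfShape (Discrete WalkingPair) F] (a a' : C)

/-- The comparison iso `F (a ⨯ a') ≅ F a × F a'` for a product-preserving `F`. -/
noncomputable def s7e : F.obj (a ⨯ a') ≅ F.obj a × F.obj a' :=
  IsLimit.conePointUniqueUpToIso
    (isLimitOfHasBinaryProductOfPreservesLimit F a a')
    (Types.binaryProductLimit (F.obj a) (F.obj a'))

lemma s7e_hom (z : F.obj (a ⨯ a')) :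
    (s7e F a a').hom z = (F.map prod.fst z, F.map prod.snd z) := by
  have h1 := ConcreteCategory.congr_hom (IsLimit.conePointUniqueUpToIso_hom_comp
    (isLimitOfHasBinaryProductOfPreservesLimit F a a')
    (Types.binaryProductLimit (F.obj a) (F.obj a')) ⟨WalkingPair.left⟩) z
  have h2 := ConcreteCategory.congr_hom (IsLimit.conePointUniqueUpToIso_hom_comp
    (isLimitOfHasBinaryProductOfPreservesLimit F a a')
    (Types.binaryProductLimit (F.obj a) (F.obj a')) ⟨WalkingPair.right⟩) z
  exact Prod.ext h1 h2

/-- The pairing `F a × F a' → F (a ⨯ a')`. -/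
noncomputable def pairUp (p : F.obj a × F.obj a') : F.obj (a ⨯ a') :=
  (s7e F a a').inv p

lemma pairUp_fst (p : F.obj a × F.obj a') :
    F.map prod.fst (pairUp F a a' p) = p.1 :=
  ConcreteCategory.congr_hom (IsLimit.conePointUniqueUpToIso_inv_comp
    (isLimitOfHasBinaryProductOfPreservesLimit F a a')
    (Types.binaryProductLimit (F.obj a) (F.obj a')) ⟨WalkingPair.left⟩) p

lemma pairUp_snd (p : F.obj a × F.obj a') :
    F.map prod.snd (pairUp F a a' p) = p.2 :=
  ConcreteCategory.congr_hom (IsLimit.conePointUniqueUpToIso_inv_comp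
    (isLimitOfHasBinaryProductOfPreservesLimit F a a')
    (Types.binaryProductLimit (F.obj a) (F.obj a')) ⟨WalkingPair.right⟩) p

lemma pairUp_uniq (z : F.obj (a ⨯ a')) (p : F.obj a × F.obj a')
    (h1 : F.map prod.fst z = p.1) (h2 : F.map prod.snd z = p.2) :
    z = pairUp F a a' p := by
  have hz : (s7e F a a').hom z = p := by
    rw [s7e_hom, h1, h2]
  rw [← hz, pairUp]
  exact (ConcreteCategory.congr_hom (s7e F a a').hom_inv_id z).symm

lemma pairUp_map {a₁ a₁' : C} (u : a ⟶ a₁) (u' : a' ⟶ a₁') (p : F.obj a × F.obj a') :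
    F.map (prod.map u u') (pairUp F a a' p) = pairUp F a₁ a₁' (F.map u p.1, F.map u' p.2) := by
  apply pairUp_uniq
  · rw [← FunctorToTypes.map_comp_apply, prod.map_fst, FunctorToTypes.map_comp_apply,
      pairUp_fst]
  · rw [← FunctorToTypes.map_comp_apply, prod.map_snd, FunctorToTypes.map_comp_apply,
      pairUp_snd]

lemma pairUp_diag {A : C} (z : F.obj A) :
    F.map (prod.lift (𝟙 A) (𝟙 A)) z = pairUp F A A (z, z) := by
  apply pairUp_uniq
  · rw [← FunctorToTypes.map_comp_apply, prod.lift_fst, FunctorToTypes.map_id_apply]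
  · rw [← FunctorToTypes.map_comp_apply, prod.lift_snd, FunctorToTypes.map_id_apply]

end PairUp

section Main

variable (L : C × C ⥤ C) (F G T : C ⥤ Type v) (alpha : externalProd F G ⟶ L ⋙ T)

/-- The canonical elements of a left extension. -/
def s7el {c a b : C} (f : L.obj (a, b) ⟶ c) (x : F.obj a) (y : G.obj b) : T.obj c :=
  T.map f (alpha.app (a, b) (x, y))

lemma s7el_cocone (c : C) (j : CostructuredArrow L c)
    (z : F.obj j.left.1 × G.obj j.left.2) :
    ((LeftExtension.mk T alpha).coconeAt c).ι.app j z = s7el L F G T alpha j.hom z.1 z.2 :=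
  rfl

lemma s7el_rel {c a b a₁ b₁ : C} (u : a ⟶ a₁) (v : b ⟶ b₁) (f₁ : L.obj (a₁, b₁) ⟶ c)
    (x : F.obj a) (y : G.obj b) :
    s7el L F G T alpha (L.map ((u, v) : (a, b) ⟶ (a₁, b₁)) ≫ f₁) x y
      = s7el L F G T alpha f₁ (F.map u x) (G.map v y) := by
  dsimp only [s7el]
  rw [FunctorToTypes.map_comp_apply]
  exact congrArg (T.map f₁)
    (NatTrans.naturality_apply alpha ((u, v) : (a, b) ⟶ (a₁, b₁)) ((x, y) : F.obj a × G.obj b)).symm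

lemma s7el_comp {c c' a b : C} (f : L.obj (a, b) ⟶ c) (h : c ⟶ c')
    (x : F.obj a) (y : G.obj b) :
    T.map h (s7el L F G T alpha f x y) = s7el L F G T alpha (f ≫ h) x y :=
  (FunctorToTypes.map_comp_apply T f h _).symm

/-- The canonical map `L (a ⨯ a', b ⨯ b') ⟶ c ⨯ d` built from `f, f'`. -/
noncomputable def bigHom {c d a b a' b' : C} (f : L.obj (a, b) ⟶ c) (f' : L.obj (a', b') ⟶ d) :
    L.obj (a ⨯ a', b ⨯ b') ⟶ c ⨯ d :=
  prod.lift
    (L.map ((prod.fst, prod.fst) : ((a ⨯ a', b ⨯ b') : C × C) ⟶ (a, b)) ≫ f)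
    (L.map ((prod.snd, prod.snd) : ((a ⨯ a', b ⨯ b') : C × C) ⟶ (a', b')) ≫ f')

lemma bigHom_natR {c d a b a' b' a₁' b₁' : C} (u : a' ⟶ a₁') (v : b' ⟶ b₁')
    (f : L.obj (a, b) ⟶ c) (f₁' : L.obj (a₁', b₁') ⟶ d) :
    L.map ((prod.map (𝟙 a) u, prod.map (𝟙 b) v) :
        ((a ⨯ a', b ⨯ b') : C × C) ⟶ (a ⨯ a₁', b ⨯ b₁')) ≫ bigHom L f f₁'
      = bigHom L f (L.map ((u, v) : (a', b') ⟶ (a₁', b₁')) ≫ f₁') := by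
  dsimp only [bigHom]
  rw [prod.comp_lift]
  congr 1
  · rw [← Functor.map_comp_assoc]
    congr 2
    rw [prod_comp]
    simp
  · rw [← Functor.map_comp_assoc, ← Functor.map_comp_assoc]
    congr 2
    rw [prod_comp, prod_comp]
    simp

lemma bigHom_natL {c d a b a' b' a₁ b₁ : C} (u : a ⟶ a₁) (v : b ⟶ b₁)
    (f₁ : L.obj (a₁, b₁) ⟶ c) (f' : L.obj (a', b') ⟶ d) :
    L.map ((prod.map u (𝟙 a'), prod.map v (𝟙 b')) :
        ((a ⨯ a', b ⨯ b') : C × C) ⟶ (a₁ ⨯ a', b₁ ⨯ b')) ≫ bigHom L f₁ f'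
      = bigHom L (L.map ((u, v) : (a, b) ⟶ (a₁, b₁)) ≫ f₁) f' := by
  dsimp only [bigHom]
  rw [prod.comp_lift]
  congr 1
  · rw [← Functor.map_comp_assoc, ← Functor.map_comp_assoc]
    congr 2
    rw [prod_comp, prod_comp]
    simp
  · rw [← Functor.map_comp_assoc]
    congr 2
    rw [prod_comp]
    simp

lemma bigHom_diag {c d A B : C} (g : L.obj (A, B) ⟶ c ⨯ d) :
    L.map ((prod.lift (𝟙 A) (𝟙 A), prod.lift (𝟙 B) (𝟙 B)) :
        ((A, B) : C × C) ⟶ (A ⨯ A, B ⨯ B)) ≫ bigHom L (g ≫ prod.fst) (g ≫ prod.snd)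
      = g := by
  dsimp only [bigHom]
  rw [prod.comp_lift]
  rw [← Functor.map_comp_assoc, ← Functor.map_comp_assoc]
  have e1 : ((prod.lift (𝟙 A) (𝟙 A), prod.lift (𝟙 B) (𝟙 B)) :
      ((A, B) : C × C) ⟶ (A ⨯ A, B ⨯ B)) ≫
      ((prod.fst, prod.fst) : ((A ⨯ A, B ⨯ B) : C × C) ⟶ (A, B)) = 𝟙 (A, B) := by
    rw [prod_comp, prod_id]
    simp
    exact ⟨prod.lift_fst _ _, prod.lift_fst _ _⟩
  have e2 : ((prod.lift (𝟙 A) (𝟙 A), prod.lift (𝟙 B) (𝟙 B)) :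
      ((A, B) : C × C) ⟶ (A ⨯ A, B ⨯ B)) ≫
      ((prod.snd, prod.snd) : ((A ⨯ A, B ⨯ B) : C × C) ⟶ (A, B)) = 𝟙 (A, B) := by
    rw [prod_comp, prod_id]
    simp
    exact ⟨prod.lift_snd _ _, prod.lift_snd _ _⟩
  rw [e1, e2, L.map_id, Category.id_comp, Category.id_comp,
    ← prod.comp_lift, prod.lift_fst_snd, Category.comp_id]

variable [PreservesLimitsOfShape (Discrete WalkingPair) F]
  [PreservesLimitsOfShape (Discrete WalkingPair) G]

/-- The inner cocone used to define the inverse of the product comparison map. -/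
noncomputable def innerCocone (c d : C) (a b : C) (f : L.obj (a, b) ⟶ c)
    (x : F.obj a) (y : G.obj b) :
    Cocone (CostructuredArrow.proj L d ⋙ externalProd F G) where
  pt := T.obj (c ⨯ d)
  ι :=
    { app := fun j' => TypeCat.ofHom fun (z' : F.obj j'.left.1 × G.obj j'.left.2) =>
        s7el L F G T alpha (bigHom L f j'.hom)
          (pairUp F a j'.left.1 (x, z'.1)) (pairUp G b j'.left.2 (y, z'.2))
      naturality := by
        intro j' j₁' φ
        ext z'
        dsimp [externalProd]
        have key := s7el_rel L F G T alpha
          (prod.map (𝟙 a) φ.left.1) (prod.map (𝟙 b) φ.left.2)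
          (bigHom L f j₁'.hom)
          (pairUp F a j'.left.1 (x, z'.1)) (pairUp G b j'.left.2 (y, z'.2))
        rw [pairUp_map, pairUp_map, FunctorToTypes.map_id_apply,
          FunctorToTypes.map_id_apply] at key
        have hw : L.map ((φ.left.1, φ.left.2) : j'.left ⟶ j₁'.left) ≫ j₁'.hom = j'.hom :=
          CostructuredArrow.w φ
        rw [bigHom_natR, hw] at key
        exact key.symm }

/-- The outer cocone used to define the inverse of the product comparison map. -/
noncomputable def outerCocone (c d : C)
    (hd : IsColimit ((LeftExtension.mk T alpha).coconeAt d)) :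
    Cocone (CostructuredArrow.proj L c ⋙ externalProd F G) where
  pt := T.obj d → T.obj (c ⨯ d)
  ι :=
    { app := fun j => TypeCat.ofHom fun (z : F.obj j.left.1 × G.obj j.left.2) =>
        ⇑(hd.desc (innerCocone L F G T alpha c d j.left.1 j.left.2 j.hom z.1 z.2))
      naturality := by
        intro j j₁ φ
        ext z
        dsimp [externalProd]
        refine congrArg (fun (f : T.obj d ⟶ T.obj (c ⨯ d)) => ⇑f) ?_
        apply hd.hom_ext
        intro j'
        rw [hd.fac]; erw [hd.fac]
        ext z'
        dsimp [innerCocone]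
        have key := s7el_rel L F G T alpha
          (prod.map φ.left.1 (𝟙 j'.left.1)) (prod.map φ.left.2 (𝟙 j'.left.2))
          (bigHom L j₁.hom j'.hom)
          (pairUp F j.left.1 j'.left.1 (z.1, z'.1))
          (pairUp G j.left.2 j'.left.2 (z.2, z'.2))
        rw [pairUp_map, pairUp_map, FunctorToTypes.map_id_apply,
          FunctorToTypes.map_id_apply] at key
        have hw : L.map ((φ.left.1, φ.left.2) : j.left ⟶ j₁.left) ≫ j₁.hom = j.hom :=
          CostructuredArrow.w φ
        rw [bigHom_natL, hw] at key
        exact key.symm }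

/-- Main auxiliary result: a left Kan extension along any functor `L : C × C ⥤ C` of the
external product of two finite-product-preserving functors preserves finite products. -/
theorem aux7 (F G : C ⥤ Type v)
    (hF : PreservesFiniteProducts F) (hG : PreservesFiniteProducts G)
    (L : C × C ⥤ C) (T : C ⥤ Type v) (alpha : externalProd F G ⟶ L ⋙ T)
    (hT : T.IsLeftKanExtension alpha) : PreservesFiniteProducts T := by
  haveI := hF
  haveI := hG
  haveI := hT
  haveI : L.HasPointwiseLeftKanExtension (externalProd F G) := fun Y => inferInstance
  have hp := Functor.isPointwiseLeftKanExtensionOfIsLeftKanExtension T alpha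
  -- elements of `T.obj c` come from `s7el`
  have surj : ∀ (c : C) (t : T.obj c), ∃ (a b : C) (f : L.obj (a, b) ⟶ c)
      (x : F.obj a) (y : G.obj b), s7el L F G T alpha f x y = t := by
    intro c t
    obtain ⟨j, z, hz⟩ := Types.jointly_surjective _ (hp c) t
    exact ⟨j.left.1, j.left.2, j.hom, z.1, z.2, hz⟩
  -- terminal object
  haveI hterm : PreservesLimit (Functor.empty.{0} C) T := by
    have hsub : Subsingleton (⊤_ Type v) :=
      ⟨fun p q => (Types.terminalIso.{v}).toEquiv.injective (by
        apply Subsingleton.elim)⟩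
    have : IsIso (terminalComparison T) := by
      rw [isIso_iff_bijective]
      constructor
      · intro t₁ t₂ _
        obtain ⟨a, b, f, x, y, rfl⟩ := surj (⊤_ C) t₁
        obtain ⟨a', b', f', x', y', rfl⟩ := surj (⊤_ C) t₂
        have h1 := s7el_rel L F G T alpha
          (prod.fst : a ⨯ a' ⟶ a) (prod.fst : b ⨯ b' ⟶ b) f
          (pairUp F a a' (x, x')) (pairUp G b b' (y, y'))
        have h2 := s7el_rel L F G T alpha
          (prod.snd : a ⨯ a' ⟶ a') (prod.snd : b ⨯ b' ⟶ b') f'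
          (pairUp F a a' (x, x')) (pairUp G b b' (y, y'))
        rw [pairUp_fst, pairUp_fst] at h1
        rw [pairUp_snd, pairUp_snd] at h2
        have hmor : L.map ((prod.fst, prod.fst) : ((a ⨯ a', b ⨯ b') : C × C) ⟶ (a, b)) ≫ f
            = L.map ((prod.snd, prod.snd) : ((a ⨯ a', b ⨯ b') : C × C) ⟶ (a', b')) ≫ f' :=
          terminal.hom_ext _ _
        rw [← h1, ← h2, hmor]
      · intro s
        have x0 : F.obj (⊤_ C) := by
          have e := Types.terminalIso.{v}
          exact (PreservesTerminal.iso F).inv (e.inv PUnit.unit)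
        have y0 : G.obj (⊤_ C) := by
          have e := Types.terminalIso.{v}
          exact (PreservesTerminal.iso G).inv (e.inv PUnit.unit)
        refine ⟨s7el L F G T alpha (terminal.from (L.obj (⊤_ C, ⊤_ C))) x0 y0, ?_⟩
        apply hsub.elim
    exact PreservesTerminal.of_iso_comparison T
  -- binary products
  have key : ∀ c d : C, PreservesLimit (pair c d) T := by
    intro c d
    set Φ : T.obj (c ⨯ d) → T.obj c × T.obj d :=
      fun t => (T.map prod.fst t, T.map prod.snd t) with hΦ
    -- the retraction
    set ψ : T.obj c × T.obj d → T.obj (c ⨯ d) :=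
      fun p => (hp c).desc (outerCocone L F G T alpha c d (hp d)) p.1 p.2 with hψ
    have retract : ∀ t, ψ (Φ t) = t := by
      intro t
      obtain ⟨A, B, g, z, w, rfl⟩ := surj (c ⨯ d) t
      have e1 : T.map prod.fst (s7el L F G T alpha g z w)
          = s7el L F G T alpha (g ≫ prod.fst) z w := s7el_comp _ _ _ _ _ _ _ _ _
      have e2 : T.map prod.snd (s7el L F G T alpha g z w)
          = s7el L F G T alpha (g ≫ prod.snd) z w := s7el_comp _ _ _ _ _ _ _ _ _
      have fac1 : (hp c).desc (outerCocone L F G T alpha c d (hp d))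
            (s7el L F G T alpha (g ≫ prod.fst) z w)
          = (outerCocone L F G T alpha c d (hp d)).ι.app
              (CostructuredArrow.mk (g ≫ prod.fst)) ((z, w) : F.obj A × G.obj B) :=
        ConcreteCategory.congr_hom ((hp c).fac (outerCocone L F G T alpha c d (hp d))
          (CostructuredArrow.mk (g ≫ prod.fst))) ((z, w) : F.obj A × G.obj B)
      have fac2 : (hp d).desc (innerCocone L F G T alpha c d A B (g ≫ prod.fst) z w)
            (s7el L F G T alpha (g ≫ prod.snd) z w)
          = (innerCocone L F G T alpha c d A B (g ≫ prod.fst) z w).ι.app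
              (CostructuredArrow.mk (g ≫ prod.snd)) ((z, w) : F.obj A × G.obj B) :=
        ConcreteCategory.congr_hom ((hp d).fac (innerCocone L F G T alpha c d A B (g ≫ prod.fst) z w)
          (CostructuredArrow.mk (g ≫ prod.snd))) ((z, w) : F.obj A × G.obj B)
      have key2 := s7el_rel L F G T alpha
        (prod.lift (𝟙 A) (𝟙 A)) (prod.lift (𝟙 B) (𝟙 B))
        (bigHom L (g ≫ prod.fst) (g ≫ prod.snd)) z w
      rw [pairUp_diag, pairUp_diag, bigHom_diag] at key2
      calc ψ (Φ (s7el L F G T alpha g z w))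
          = (show T.obj (c ⨯ d) from (hp d).desc (innerCocone L F G T alpha c d A B (g ≫ prod.fst) z w)
              (s7el L F G T alpha (g ≫ prod.snd) z w)) := by
            rw [hψ, hΦ]; dsimp only; rw [e1, e2, fac1]; rfl
        _ = (show T.obj (c ⨯ d) from (innerCocone L F G T alpha c d A B (g ≫ prod.fst) z w).ι.app
              (CostructuredArrow.mk (g ≫ prod.snd)) ((z, w) : F.obj A × G.obj B)) := fac2
        _ = s7el L F G T alpha g z w := by
            dsimp [innerCocone]
            exact key2.symm
    have hsurj : Function.Surjective Φ := by
      rintro ⟨s, t⟩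
      obtain ⟨a, b, f, x, y, rfl⟩ := surj c s
      obtain ⟨a', b', f', x', y', rfl⟩ := surj d t
      refine ⟨s7el L F G T alpha (bigHom L f f')
        (pairUp F a a' (x, x')) (pairUp G b b' (y, y')), ?_⟩
      rw [hΦ]
      dsimp only
      rw [s7el_comp, s7el_comp]
      have hb1 : bigHom L f f' ≫ prod.fst
          = L.map ((prod.fst, prod.fst) : ((a ⨯ a', b ⨯ b') : C × C) ⟶ (a, b)) ≫ f :=
        prod.lift_fst _ _
      have hb2 : bigHom L f f' ≫ prod.snd
          = L.map ((prod.snd, prod.snd) : ((a ⨯ a', b ⨯ b') : C × C) ⟶ (a', b')) ≫ f' :=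
        prod.lift_snd _ _
      rw [hb1, hb2, s7el_rel, s7el_rel, pairUp_fst, pairUp_fst, pairUp_snd, pairUp_snd]
    have hbij : Function.Bijective Φ :=
      ⟨Function.LeftInverse.injective retract, hsurj⟩
    -- transfer to the product comparison morphism
    have hcomp : ∀ t, prodComparison T c d t
        = (Types.binaryProductIso (T.obj c) (T.obj d)).inv (Φ t) := by
      intro t
      apply (Types.binaryProductIso (T.obj c) (T.obj d)).toEquiv.injective
      show (Types.binaryProductIso (T.obj c) (T.obj d)).hom _ =
        (Types.binaryProductIso (T.obj c) (T.obj d)).hom _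
      have hih : (Types.binaryProductIso (T.obj c) (T.obj d)).hom
          ((Types.binaryProductIso (T.obj c) (T.obj d)).inv (Φ t)) = Φ t :=
        ConcreteCategory.congr_hom (Types.binaryProductIso (T.obj c) (T.obj d)).inv_hom_id (Φ t)
      rw [hih]
      apply Prod.ext
      · exact (ConcreteCategory.congr_hom (Types.binaryProductIso_hom_comp_fst (T.obj c) (T.obj d))
          (prodComparison T c d t)).trans (ConcreteCategory.congr_hom (prodComparison_fst T c d) t)
      · exact (ConcreteCategory.congr_hom (Types.binaryProductIso_hom_comp_snd (T.obj c) (T.obj d))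
          (prodComparison T c d t)).trans (ConcreteCategory.congr_hom (prodComparison_snd T c d) t)
    have : IsIso (prodComparison T c d) := by
      rw [isIso_iff_bijective]
      have : prodComparison T c d =
          fun t => (Types.binaryProductIso (T.obj c) (T.obj d)).inv (Φ t) := funext hcomp
      rw [this]
      exact ((Types.binaryProductIso (T.obj c) (T.obj d)).symm.toEquiv.bijective).comp hbij
    exact PreservesLimitPair.of_iso_prod_comparison T c d
  haveI : PreservesLimitsOfShape (Discrete WalkingPair) T :=
    ⟨fun {K} => by
      haveI := key (K.obj ⟨WalkingPair.left⟩) (K.obj ⟨WalkingPair.right⟩)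
      exact preservesLimit_of_iso_diagram T (diagramIsoPair K).symm⟩
  haveI : PreservesLimitsOfShape (Discrete PEmpty.{1}) T :=
    preservesLimitsOfShape_pempty_of_preservesTerminal T
  exact PreservesFiniteProducts.of_preserves_binary_and_terminal T

end Main

end Statement7Aux

/-- Let `C` be a small category with finite products and a symmetric
monoidal structure whose tensor preserves finite products in each variable.  If
`F, G : C ⥤ Set` preserve finite products, then so does their Day convolution
`F ⊗ G`, i.e. any left Kan extension of the external product `F ⊠ G` along the
tensor functor `⊗ : C × C ⥤ C`. -/
theorem statement7 (C : Type v) [SmallCategory C] [HasFiniteProducts C]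
    [MonoidalCategory C] [SymmetricCategory C]
    (htl : ∀ c : C, PreservesFiniteProducts (tensorLeft c))
    (htr : ∀ c : C, PreservesFiniteProducts (tensorRight c))
    (F G : C ⥤ Type v) (hF : PreservesFiniteProducts F) (hG : PreservesFiniteProducts G)
    (T : C ⥤ Type v) (alpha : externalProd F G ⟶ tensorF C ⋙ T)
    (hT : T.IsLeftKanExtension alpha) :
    PreservesFiniteProducts T :=
  aux7 F G hF hG (tensorF C) T alpha hT

end Paper
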